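/- Let G and F be finite simple graphs, φ a voltage assignment on G whose values lie in a subgroup Γ of Aut(F). Let ρ₁, …, ρ_ℓ be group homomorphisms from Γ to the invertible complex f_i×f_i matrices, let m₁, …, m_ℓ be nonnegative integers with Σᵢ mᵢfᵢ = |V(F)|, and suppose M is an invertible complex V(F)×V(F) matrix such that for every γ ∈ Γ, M⁻¹P(γ)M equals the block diagonal matrix ⊕_{i=1}^{ℓ} (I_{mᵢ} ⊗ ρᵢ(γ)), and moreover M⁻¹A(F)M = A(F) and M⁻¹D(F)M = D(F). Then for every complex number μ, (M ⊗ I_{V(G)})⁻¹ (A(G×^φF) − μ·D(G×^φF)) (M ⊗ I_{V(G)}) = ⊕_{i=1}^{ℓ} I_{mᵢ} ⊗ ( Σ_{γ∈Γ} ρᵢ(γ) ⊗ A(G_{φ,γ}) − μ·I_{fᵢ} ⊗ D(G) ) + (A(F) − μ·D(F)) ⊗ I_{V(G)}, where vertices of G×^φF are indexed by pairs (v,u) with v ∈ V(F), u ∈ V(G). -/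

import Mathlib

open Matrix BigOperators Kronecker
open scoped Classical

noncomputable section

variable {α β : Type*}

def adjM [Fintype α] (G : SimpleGraph α) : Matrix α α ℂ :=
  Matrix.of fun u v => if G.Adj u v then (1 : ℂ) else 0

def degM [Fintype α] (G : SimpleGraph α) : Matrix α α ℂ :=
  Matrix.diagonal fun v => ((G.neighborSet v).ncard : ℂ)

def Fpoly [Fintype α] (G : SimpleGraph α) (lam mu : ℂ) : ℂ :=
  (lam • (1 : Matrix α α ℂ) - (adjM G - mu • degM G)).det

def permM (γ : Equiv.Perm β) : Matrix β β ℂ :=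
  Matrix.of fun v w => if γ v = w then (1 : ℂ) else 0

def voltM [Fintype α] (G : SimpleGraph α) (φ : α → α → Equiv.Perm β) (γ : Equiv.Perm β) :
    Matrix α α ℂ :=
  Matrix.of fun u₁ u₂ => if G.Adj u₁ u₂ ∧ φ u₁ u₂ = γ then (1 : ℂ) else 0

def autPerm (F : SimpleGraph β) : Subgroup (Equiv.Perm β) where
  carrier := {γ | ∀ a b, F.Adj (γ a) (γ b) ↔ F.Adj a b}
  one_mem' := by intro a b; simp
  mul_mem' := by intro γ δ hγ hδ a b; simp [Equiv.Perm.mul_apply, hγ _ _, hδ _ _]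
  inv_mem' := by intro γ hγ a b; simpa using (hγ (γ⁻¹ a) (γ⁻¹ b)).symm

def bundle (G : SimpleGraph α) (F : SimpleGraph β) (φ : α → α → Equiv.Perm β)
    (hsym : ∀ u₁ u₂, G.Adj u₁ u₂ → φ u₂ u₁ = (φ u₁ u₂)⁻¹) : SimpleGraph (β × α) where
  Adj p q := (G.Adj p.2 q.2 ∧ q.1 = φ p.2 q.2 p.1) ∨ (p.2 = q.2 ∧ F.Adj p.1 q.1)
  symm := by
    refine ⟨?_⟩
    rintro ⟨v₁, u₁⟩ ⟨v₂, u₂⟩ hadj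
    dsimp only at hadj ⊢
    rcases hadj with ⟨h, rfl⟩ | ⟨rfl, h⟩
    · left
      refine ⟨h.symm, ?_⟩
      rw [hsym _ _ h]
      simp
    · right
      exact ⟨rfl, h.symm⟩
  loopless := by
    refine ⟨?_⟩
    rintro ⟨v, u⟩ hadj
    dsimp only at hadj
    rcases hadj with ⟨h, _⟩ | ⟨_, h⟩
    · exact G.loopless.irrefl u h
    · exact F.loopless.irrefl v h

def dsum [Fintype α] (B : β → Matrix α α ℂ) : Matrix (β × α) (β × α) ℂ :=
  Matrix.of fun p q => if p.1 = q.1 then B p.1 p.2 q.2 else 0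

def bigE {ℓ : ℕ} {f m : Fin ℓ → ℕ} (e : β ≃ Σ i : Fin ℓ, Fin (m i) × Fin (f i)) (α : Type*) :
    β × α ≃ Σ i : Fin ℓ, Fin (m i) × (Fin (f i) × α) :=
  (e.prodCongr (Equiv.refl α)).trans
    ((Equiv.sigmaProdDistrib _ _).trans (Equiv.sigmaCongrRight fun _ => Equiv.prodAssoc _ _ _))



section Aux

variable [Fintype α] [Fintype β]

lemma adjM_bundle (G : SimpleGraph α) (F : SimpleGraph β) (φ : α → α → Equiv.Perm β)
    (hsym : ∀ u₁ u₂, G.Adj u₁ u₂ → φ u₂ u₁ = (φ u₁ u₂)⁻¹)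
    (Γ : Subgroup (Equiv.Perm β)) (hφΓ : ∀ u₁ u₂, G.Adj u₁ u₂ → φ u₁ u₂ ∈ Γ) :
    adjM (bundle G F φ hsym)
      = (∑ γ : Γ, permM (γ : Equiv.Perm β) ⊗ₖ voltM G φ (γ : Equiv.Perm β))
        + adjM F ⊗ₖ (1 : Matrix α α ℂ) := by
  ext ⟨v₁, u₁⟩ ⟨v₂, u₂⟩
  simp only [adjM, bundle, Matrix.add_apply, Matrix.sum_apply, Matrix.kroneckerMap_apply,
    Matrix.of_apply, permM, voltM, Matrix.one_apply]
  by_cases hadj : G.Adj u₁ u₂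
  · have hne : u₁ ≠ u₂ := G.ne_of_adj hadj
    rw [Finset.sum_eq_single (⟨φ u₁ u₂, hφΓ _ _ hadj⟩ : Γ)]
    · by_cases hv : v₂ = φ u₁ u₂ v₁ <;> simp [hadj, hne, hv, eq_comm]
    · rintro ⟨γ, hγ⟩ - hb
      have : ¬ (φ u₁ u₂ = γ) := fun h => hb (by simp [← h])
      simp [this]
    · intro h; exact absurd (Finset.mem_univ _) h
  · by_cases hu : u₁ = u₂ <;> by_cases hF : F.Adj v₁ v₂ <;> simp [hadj, hu, hF]

lemma degM_bundle (G : SimpleGraph α) (F : SimpleGraph β) (φ : α → α → Equiv.Perm β)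
    (hsym : ∀ u₁ u₂, G.Adj u₁ u₂ → φ u₂ u₁ = (φ u₁ u₂)⁻¹) :
    degM (bundle G F φ hsym)
      = (1 : Matrix β β ℂ) ⊗ₖ degM G + degM F ⊗ₖ (1 : Matrix α α ℂ) := by
  have key : ∀ (v : β) (u : α),
      ((bundle G F φ hsym).neighborSet (v, u)).ncard
        = (G.neighborSet u).ncard + (F.neighborSet v).ncard := by
    intro v u
    have hset : (bundle G F φ hsym).neighborSet (v, u)
        = (fun u₂ => (φ u u₂ v, u₂)) '' (G.neighborSet u)
          ∪ (fun v₂ => (v₂, u)) '' (F.neighborSet v) := by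
      ext ⟨v₂, u₂⟩
      simp only [SimpleGraph.neighborSet, bundle, Set.mem_setOf_eq, Set.mem_union,
        Set.mem_image, SimpleGraph.mem_neighborSet]
      constructor
      · rintro (⟨h1, h2⟩ | ⟨rfl, h⟩)
        · exact Or.inl ⟨u₂, h1, by simp [h2]⟩
        · exact Or.inr ⟨v₂, h, rfl⟩
      · rintro (⟨u₃, h1, h2⟩ | ⟨v₃, h1, h2⟩)
        · obtain ⟨rfl, rfl⟩ := Prod.mk.injEq .. ▸ h2
          exact Or.inl ⟨h1, rfl⟩
        · obtain ⟨rfl, rfl⟩ := Prod.mk.injEq .. ▸ h2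
          exact Or.inr ⟨rfl, h1⟩
    have hinj1 : Function.Injective (fun u₂ : α => ((φ u u₂ v, u₂) : β × α)) := by
      intro a b h; exact (Prod.mk.injEq .. ▸ h).2
    have hinj2 : Function.Injective (fun v₂ : β => ((v₂, u) : β × α)) := by
      intro a b h; exact (Prod.mk.injEq .. ▸ h).1
    have hdisj : Disjoint ((fun u₂ => ((φ u u₂ v, u₂) : β × α)) '' (G.neighborSet u))
        ((fun v₂ => ((v₂, u) : β × α)) '' (F.neighborSet v)) := by
      rw [Set.disjoint_left]
      rintro ⟨p, q⟩ ⟨u₂, hu₂, h⟩ ⟨v₂, hv₂, h'⟩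
      obtain ⟨-, rfl⟩ := Prod.mk.injEq .. ▸ h
      obtain ⟨-, h''⟩ := Prod.mk.injEq .. ▸ h'
      exact G.ne_of_adj hu₂ h''
    rw [hset, Set.ncard_union_eq hdisj ((Set.toFinite _).image _) ((Set.toFinite _).image _),
      Set.ncard_image_of_injective _ hinj1, Set.ncard_image_of_injective _ hinj2]
  ext ⟨v₁, u₁⟩ ⟨v₂, u₂⟩
  simp only [degM, Matrix.add_apply, Matrix.kroneckerMap_apply, Matrix.one_apply,
    Matrix.diagonal_apply]
  by_cases hv : v₁ = v₂ <;> by_cases hu : u₁ = u₂ <;>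
    simp [hv, hu, Prod.ext_iff, key, mul_comm]

lemma conj_sub_add (N X Y Z W : Matrix (β × α) (β × α) ℂ) (μ : ℂ) :
    N⁻¹ * (X - μ • Y + (Z - μ • W)) * N
      = N⁻¹ * X * N - μ • (N⁻¹ * Y * N) + (N⁻¹ * Z * N - μ • (N⁻¹ * W * N)) := by
  simp only [Matrix.mul_add, Matrix.add_mul, Matrix.mul_sub, Matrix.sub_mul,
    Matrix.mul_smul, Matrix.smul_mul]

lemma sub_smul_kron (A B : Matrix β β ℂ) (C : Matrix α α ℂ) (μ : ℂ) :
    (A - μ • B) ⊗ₖ C = A ⊗ₖ C - μ • (B ⊗ₖ C) := by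
  ext ⟨v₁, u₁⟩ ⟨v₂, u₂⟩
  simp only [Matrix.kroneckerMap_apply, Matrix.sub_apply, Matrix.smul_apply, smul_eq_mul]
  ring

lemma final_reindex {ℓ : ℕ} {f m : Fin ℓ → ℕ} (e : β ≃ Σ i : Fin ℓ, Fin (m i) × Fin (f i))
    {s : Type*} [Fintype s] (t : Finset s)
    (R : ∀ i : Fin ℓ, s → Matrix (Fin (f i)) (Fin (f i)) ℂ)
    (V : s → Matrix α α ℂ) (D : Matrix α α ℂ) (μ : ℂ) :
    (∑ γ ∈ t, (Matrix.reindex e.symm e.symm (Matrix.blockDiagonal' fun i =>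
          (1 : Matrix (Fin (m i)) (Fin (m i)) ℂ) ⊗ₖ R i γ)) ⊗ₖ V γ)
        - μ • ((1 : Matrix β β ℂ) ⊗ₖ D)
      = Matrix.reindex (bigE e α).symm (bigE e α).symm (Matrix.blockDiagonal' fun i =>
          (1 : Matrix (Fin (m i)) (Fin (m i)) ℂ) ⊗ₖ ((∑ γ ∈ t, R i γ ⊗ₖ V γ)
            - μ • ((1 : Matrix (Fin (f i)) (Fin (f i)) ℂ) ⊗ₖ D))) := by
  ext ⟨v₁, u₁⟩ ⟨v₂, u₂⟩
  rcases h1 : e v₁ with ⟨i₁, a₁, b₁⟩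
  rcases h2 : e v₂ with ⟨i₂, a₂, b₂⟩
  have hb1 : bigE e α (v₁, u₁) = ⟨i₁, (a₁, (b₁, u₁))⟩ := by
    simp [bigE, h1, Equiv.sigmaProdDistrib]
  have hb2 : bigE e α (v₂, u₂) = ⟨i₂, (a₂, (b₂, u₂))⟩ := by
    simp [bigE, h2, Equiv.sigmaProdDistrib]
  have hv : v₁ = v₂ ↔ (⟨i₁, a₁, b₁⟩ : Σ i : Fin ℓ, Fin (m i) × Fin (f i)) = ⟨i₂, a₂, b₂⟩ := by
    rw [← h1, ← h2, Equiv.apply_eq_iff_eq]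
  simp only [Matrix.sub_apply, Matrix.sum_apply, Matrix.smul_apply, Matrix.kroneckerMap_apply,
    Matrix.reindex_apply, Matrix.submatrix_apply, Equiv.symm_symm, hb1, hb2, h1, h2,
    Matrix.one_apply, smul_eq_mul]
  rcases eq_or_ne i₁ i₂ with rfl | hne
  · have hv' : v₁ = v₂ ↔ (a₁ = a₂ ∧ b₁ = b₂) := by
      rw [hv]; simp [Prod.ext_iff]
    simp only [Matrix.blockDiagonal'_apply_eq]
    simp only [Matrix.kroneckerMap_apply, Matrix.sub_apply, Matrix.sum_apply,
      Matrix.smul_apply, Matrix.one_apply, smul_eq_mul, hv']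
    by_cases ha : a₁ = a₂ <;> by_cases hbb : b₁ = b₂ <;>
      simp [ha, hbb, Finset.mul_sum, mul_sub, mul_assoc]
  · have hvne : ¬ v₁ = v₂ := fun h => hne (congrArg Sigma.fst (hv.mp h))
    have hz : ∀ γ ∈ t, Matrix.blockDiagonal' (fun i =>
        (1 : Matrix (Fin (m i)) (Fin (m i)) ℂ) ⊗ₖ R i γ)
          ⟨i₁, (a₁, b₁)⟩ ⟨i₂, (a₂, b₂)⟩ * V γ u₁ u₂ = 0 := by
      intro γ _
      rw [Matrix.blockDiagonal'_apply_ne _ _ _ hne, zero_mul]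
    rw [Finset.sum_eq_zero hz, Matrix.blockDiagonal'_apply_ne _ _ _ hne]
    simp [hvne]

end Aux

theorem bundle_matrix_similarity_general
    {α β : Type*} [Fintype α] [Fintype β]
    (G : SimpleGraph α) (F : SimpleGraph β) (φ : α → α → Equiv.Perm β)
    (hsym : ∀ u₁ u₂, G.Adj u₁ u₂ → φ u₂ u₁ = (φ u₁ u₂)⁻¹)
    (Γ : Subgroup (Equiv.Perm β)) (hΓAut : Γ ≤ autPerm F)
    (hφΓ : ∀ u₁ u₂, G.Adj u₁ u₂ → φ u₁ u₂ ∈ Γ)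
    (ℓ : ℕ) (f m : Fin ℓ → ℕ) (ρ : ∀ i : Fin ℓ, Γ →* GL (Fin (f i)) ℂ)
    (hsum : ∑ i, m i * f i = Fintype.card β)
    (e : β ≃ Σ i : Fin ℓ, Fin (m i) × Fin (f i))
    (M : Matrix β β ℂ) (hM : IsUnit M.det)
    (hP : ∀ γ : Γ, Matrix.reindex e e (M⁻¹ * permM (γ : Equiv.Perm β) * M)
        = Matrix.blockDiagonal' fun i =>
            (1 : Matrix (Fin (m i)) (Fin (m i)) ℂ)
              ⊗ₖ (ρ i γ : Matrix (Fin (f i)) (Fin (f i)) ℂ))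
    (hMA : M⁻¹ * adjM F * M = adjM F) (hMD : M⁻¹ * degM F * M = degM F)
    (μ : ℂ) :
    (M ⊗ₖ (1 : Matrix α α ℂ))⁻¹
        * (adjM (bundle G F φ hsym) - μ • degM (bundle G F φ hsym))
        * (M ⊗ₖ (1 : Matrix α α ℂ))
      = Matrix.reindex (bigE e α).symm (bigE e α).symm
          (Matrix.blockDiagonal' fun i =>
            (1 : Matrix (Fin (m i)) (Fin (m i)) ℂ) ⊗ₖ
              ((∑ γ : Γ, (ρ i γ : Matrix (Fin (f i)) (Fin (f i)) ℂ)
                  ⊗ₖ voltM G φ (γ : Equiv.Perm β))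
                - μ • ((1 : Matrix (Fin (f i)) (Fin (f i)) ℂ) ⊗ₖ degM G)))
        + (adjM F - μ • degM F) ⊗ₖ (1 : Matrix α α ℂ) := by
  have hMinv : M⁻¹ * M = 1 := Matrix.nonsing_inv_mul M hM
  have hN : (M ⊗ₖ (1 : Matrix α α ℂ))⁻¹ = M⁻¹ ⊗ₖ (1 : Matrix α α ℂ) := by
    rw [Matrix.inv_kronecker, inv_one]
  have hP' : ∀ γ : Γ, M⁻¹ * permM (γ : Equiv.Perm β) * M
      = Matrix.reindex e.symm e.symm (Matrix.blockDiagonal' fun i =>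
          (1 : Matrix (Fin (m i)) (Fin (m i)) ℂ)
            ⊗ₖ (ρ i γ : Matrix (Fin (f i)) (Fin (f i)) ℂ)) := by
    intro γ
    rw [← hP γ]
    ext a b
    simp [Matrix.reindex_apply, Matrix.submatrix_apply]
  rw [adjM_bundle G F φ hsym Γ hφΓ, degM_bundle G F φ hsym]
  have hre : (∑ γ : Γ, permM (γ : Equiv.Perm β) ⊗ₖ voltM G φ (γ : Equiv.Perm β))
        + adjM F ⊗ₖ (1 : Matrix α α ℂ)
        - μ • ((1 : Matrix β β ℂ) ⊗ₖ degM G + degM F ⊗ₖ (1 : Matrix α α ℂ))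
      = (∑ γ : Γ, permM (γ : Equiv.Perm β) ⊗ₖ voltM G φ (γ : Equiv.Perm β))
          - μ • ((1 : Matrix β β ℂ) ⊗ₖ degM G)
          + (adjM F ⊗ₖ (1 : Matrix α α ℂ) - μ • (degM F ⊗ₖ (1 : Matrix α α ℂ))) := by
    rw [smul_add]; abel
  rw [hre, conj_sub_add]
  have h1 : (M ⊗ₖ (1 : Matrix α α ℂ))⁻¹
        * (∑ γ : Γ, permM (γ : Equiv.Perm β) ⊗ₖ voltM G φ (γ : Equiv.Perm β))
        * (M ⊗ₖ (1 : Matrix α α ℂ))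
      = ∑ γ : Γ, (M⁻¹ * permM (γ : Equiv.Perm β) * M) ⊗ₖ voltM G φ (γ : Equiv.Perm β) := by
    rw [hN, Finset.mul_sum, Finset.sum_mul]
    refine Finset.sum_congr rfl fun γ _ => ?_
    rw [← Matrix.mul_kronecker_mul, ← Matrix.mul_kronecker_mul, Matrix.one_mul, Matrix.mul_one]
  have h2 : (M ⊗ₖ (1 : Matrix α α ℂ))⁻¹ * ((1 : Matrix β β ℂ) ⊗ₖ degM G)
        * (M ⊗ₖ (1 : Matrix α α ℂ))
      = (1 : Matrix β β ℂ) ⊗ₖ degM G := by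
    rw [hN, ← Matrix.mul_kronecker_mul, ← Matrix.mul_kronecker_mul, Matrix.mul_one,
      Matrix.one_mul, Matrix.mul_one, hMinv]
  have h3 : (M ⊗ₖ (1 : Matrix α α ℂ))⁻¹ * (adjM F ⊗ₖ (1 : Matrix α α ℂ))
        * (M ⊗ₖ (1 : Matrix α α ℂ))
      = adjM F ⊗ₖ (1 : Matrix α α ℂ) := by
    rw [hN, ← Matrix.mul_kronecker_mul, ← Matrix.mul_kronecker_mul, Matrix.one_mul,
      Matrix.mul_one, hMA]
  have h4 : (M ⊗ₖ (1 : Matrix α α ℂ))⁻¹ * (degM F ⊗ₖ (1 : Matrix α α ℂ))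
        * (M ⊗ₖ (1 : Matrix α α ℂ))
      = degM F ⊗ₖ (1 : Matrix α α ℂ) := by
    rw [hN, ← Matrix.mul_kronecker_mul, ← Matrix.mul_kronecker_mul, Matrix.one_mul,
      Matrix.mul_one, hMD]
  rw [h1, h2, h3, h4, sub_smul_kron]
  congr 1
  simp only [hP']
  exact final_reindex e Finset.univ (fun i γ => (ρ i γ : Matrix (Fin (f i)) (Fin (f i)) ℂ))
    (fun γ : Γ => voltM G φ (γ : Equiv.Perm β)) (degM G) μ


end
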